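/- Let c ≥ 1 be a real number and set ι(t) = log(c·(t+1)·(t+2)) for integers t ≥ 1. Then for every integer t ≥ 1, one has √(ι(t)/t) ≤ Σ_{i=1}^t α_t^i · √(ι(i)/i) ≤ 2·√(ι(t)/t). -/

import Mathlib

/-- Learning rate `α_t = (H+1)/(H+t)`. -/
noncomputable def lr (H : ℕ) (t : ℕ) : ℝ := ((H : ℝ) + 1) / ((H : ℝ) + t)

/-- Weights `α_t^0 = ∏_{j=1}^t (1 - α_j)` and `α_t^i = α_i ∏_{j=i+1}^t (1 - α_j)` for `i ≥ 1`. -/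
noncomputable def alphaW (H : ℕ) (t i : ℕ) : ℝ :=
  if i = 0 then ∏ j ∈ Finset.Icc 1 t, (1 - lr H j)
  else lr H i * ∏ j ∈ Finset.Icc (i + 1) t, (1 - lr H j)

lemma lr_nonneg (H t : ℕ) : 0 ≤ lr H t := by
  unfold lr; positivity

lemma one_sub_lr (H t : ℕ) : 1 - lr H (t + 1) = (t : ℝ) / ((H : ℝ) + t + 1) := by
  unfold lr
  have h : ((H : ℝ) + (t + 1 : ℕ)) = (H : ℝ) + t + 1 := by push_cast; ring
  rw [h]
  have hpos : (0 : ℝ) < (H : ℝ) + t + 1 := by positivity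
  field_simp
  ring

lemma one_sub_lr_nonneg (H t : ℕ) (ht : 1 ≤ t) : 0 ≤ 1 - lr H t := by
  obtain ⟨s, rfl⟩ := Nat.exists_eq_add_of_le ht
  rw [show 1 + s = s + 1 by ring, one_sub_lr]
  positivity

lemma alphaW_nonneg (H t i : ℕ) (hi : 1 ≤ i) : 0 ≤ alphaW H t i := by
  unfold alphaW
  rw [if_neg (by omega)]
  apply mul_nonneg (lr_nonneg H i)
  apply Finset.prod_nonneg
  intro j hj
  rw [Finset.mem_Icc] at hj
  exact one_sub_lr_nonneg H j (by omega)

lemma alphaW_succ (H t i : ℕ) (hi : 1 ≤ i) (hit : i ≤ t) :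
    alphaW H (t + 1) i = alphaW H t i * (1 - lr H (t + 1)) := by
  unfold alphaW
  rw [if_neg (by omega), if_neg (by omega),
    Finset.prod_Icc_succ_top (by omega : i + 1 ≤ t + 1)]
  ring

lemma alphaW_self (H t : ℕ) : alphaW H (t + 1) (t + 1) = lr H (t + 1) := by
  unfold alphaW
  rw [if_neg (by omega), Finset.Icc_eq_empty (by omega), Finset.prod_empty, mul_one]

lemma alphaW_one : ∀ H : ℕ, alphaW H 1 1 = 1 := by
  intro H
  have := alphaW_self H 0
  rw [this]
  unfold lr
  push_cast
  rw [div_self (by positivity)]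

lemma sum_step (H t : ℕ) (f : ℕ → ℝ) :
    ∑ i ∈ Finset.Icc 1 (t + 1), alphaW H (t + 1) i * f i
      = (1 - lr H (t + 1)) * (∑ i ∈ Finset.Icc 1 t, alphaW H t i * f i)
        + lr H (t + 1) * f (t + 1) := by
  rw [Finset.sum_Icc_succ_top (by omega : 1 ≤ t + 1), alphaW_self, Finset.mul_sum]
  congr 1
  apply Finset.sum_congr rfl
  intro i hi
  rw [Finset.mem_Icc] at hi
  rw [alphaW_succ H t i hi.1 hi.2]
  ring

lemma sum_alphaW (H t : ℕ) (ht : 1 ≤ t) :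
    ∑ i ∈ Finset.Icc 1 t, alphaW H t i = 1 := by
  induction t, ht using Nat.le_induction with
  | base => simp [alphaW_one H]
  | succ t ht ih =>
    have h := sum_step H t (fun _ => 1)
    simp only [mul_one] at h
    rw [h, ih]
    ring

lemma sum_alphaW_inv_sqrt (H t : ℕ) (ht : 1 ≤ t) :
    ∑ i ∈ Finset.Icc 1 t, alphaW H t i * (Real.sqrt i)⁻¹ ≤ 2 * (Real.sqrt t)⁻¹ := by
  induction t, ht using Nat.le_induction with
  | base => simp [alphaW_one H]
  | succ t ht ih =>
    rw [sum_step H t (fun i => (Real.sqrt i)⁻¹)]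
    have h1 : 0 ≤ 1 - lr H (t + 1) := by
      rw [one_sub_lr]; positivity
    have h2 : (1 - lr H (t+1)) * (∑ i ∈ Finset.Icc 1 t, alphaW H t i * (Real.sqrt i)⁻¹)
        ≤ (1 - lr H (t+1)) * (2 * (Real.sqrt t)⁻¹) := mul_le_mul_of_nonneg_left ih h1
    refine le_trans (add_le_add h2 le_rfl) ?_
    -- now the pure arithmetic step
    rw [one_sub_lr]
    unfold lr
    have hc1 : ((t:ℝ) + 1) = ((t+1 : ℕ) : ℝ) := by push_cast; ring
    have hc2 : ((H : ℝ) + (t + 1 : ℕ)) = (H : ℝ) + t + 1 := by push_cast; ring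
    rw [hc2]
    set s := Real.sqrt t with hs_def
    set s' := Real.sqrt ((t:ℕ)+1 : ℕ) with hs'_def
    have hs : 0 < s := Real.sqrt_pos.mpr (by exact_mod_cast Nat.pos_of_ne_zero (by omega))
    have hs' : 0 < s' := Real.sqrt_pos.mpr (by positivity)
    have hs2 : s ^ 2 = t := Real.sq_sqrt (by positivity)
    have hs'2 : s' ^ 2 = (t : ℝ) + 1 := by
      rw [hs'_def, Real.sq_sqrt (by positivity)]; push_cast; ring
    have hD : (0:ℝ) < (H:ℝ) + t + 1 := by positivity
    have key : 2 * t * s' ≤ ((H:ℝ) + 2 * t + 1) * s := by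
      have h4 : 2 * t * s' ≤ (2 * t + 1) * s := by
        nlinarith [sq_nonneg (2 * t * s - (2*t+1) * s'), sq_nonneg (s - s'), sq_nonneg s,
          mul_pos hs hs', sq_nonneg (s*s' - t)]
      have hH0 : (0:ℝ) ≤ (H:ℝ) := Nat.cast_nonneg H
      nlinarith
    have goal2 : (t:ℝ) * 2 * s' + ((H:ℝ)+1) * s ≤ 2 * s * ((H:ℝ)+t+1) := by nlinarith [key]
    have lhs_eq : (t:ℝ)/((H:ℝ)+t+1) * (2*s⁻¹) + ((H:ℝ)+1)/((H:ℝ)+t+1) * s'⁻¹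
        = ((t:ℝ)*2*s' + ((H:ℝ)+1)*s)/(((H:ℝ)+t+1)*s*s') := by
      field_simp
    have rhs_eq : 2*s'⁻¹ = (2*s*((H:ℝ)+t+1))/(((H:ℝ)+t+1)*s*s') := by
      field_simp
    rw [lhs_eq, rhs_eq]
    exact div_le_div_of_nonneg_right goal2 (by positivity)


lemma exp_two_lt : Real.exp 2 < 12 := by
  have h := Real.exp_one_lt_d9
  have h2 : Real.exp 2 = Real.exp 1 * Real.exp 1 := by
    rw [← Real.exp_add]; norm_num
  nlinarith [Real.exp_pos 1]

lemma one_le_log_six : (1:ℝ) ≤ Real.log 6 := by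
  rw [Real.le_log_iff_exp_le (by norm_num)]
  nlinarith [Real.exp_one_lt_d9]

lemma two_div_le_log (c : ℝ) (hc : 1 ≤ c) (i : ℕ) (hi : 1 ≤ i) :
    2 * (i:ℝ) / ((i:ℝ) + 1) ≤ Real.log (c * ((i:ℝ) + 1) * ((i:ℝ) + 2)) := by
  have hc0 : (0:ℝ) < c := by linarith
  have hlogc : 0 ≤ Real.log c := Real.log_nonneg hc
  have hmono : Real.log (((i:ℝ)+1) * ((i:ℝ)+2)) ≤ Real.log (c * ((i:ℝ)+1) * ((i:ℝ)+2)) := by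
    rw [mul_assoc, Real.log_mul hc0.ne' (by positivity)]
    linarith
  rcases eq_or_lt_of_le hi with h1 | h2
  · have hi1 : i = 1 := h1.symm
    subst hi1
    push_cast at hmono ⊢
    norm_num at hmono ⊢
    linarith [one_le_log_six]
  · have h2' : (2:ℝ) ≤ (i:ℝ) := by exact_mod_cast h2
    have h12 : (12:ℝ) ≤ ((i:ℝ)+1) * ((i:ℝ)+2) := by nlinarith
    have hlog12 : (2:ℝ) ≤ Real.log (((i:ℝ)+1) * ((i:ℝ)+2)) := by
      calc (2:ℝ) ≤ Real.log 12 := by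
            rw [Real.le_log_iff_exp_le (by norm_num)]
            linarith [exp_two_lt]
        _ ≤ _ := Real.log_le_log (by norm_num) h12
    have hdle : 2 * (i:ℝ) / ((i:ℝ)+1) ≤ 2 := by
      rw [div_le_iff₀ (by positivity)]
      linarith
    linarith

lemma iota_pos (c : ℝ) (hc : 1 ≤ c) (t : ℕ) :
    0 < Real.log (c * ((t:ℝ) + 1) * ((t:ℝ) + 2)) := by
  apply Real.log_pos
  have h1 : (0:ℝ) ≤ ((t:ℝ)+1) * ((t:ℝ)+2) := by positivity
  nlinarith [mul_nonneg (sub_nonneg.mpr hc) h1, Nat.cast_nonneg (α := ℝ) t]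

lemma iota_mono (c : ℝ) (hc : 1 ≤ c) (i t : ℕ) (hit : i ≤ t) :
    Real.log (c * ((i:ℝ) + 1) * ((i:ℝ) + 2)) ≤ Real.log (c * ((t:ℝ) + 1) * ((t:ℝ) + 2)) := by
  have hc0 : (0:ℝ) < c := by linarith
  have hit' : (i:ℝ) ≤ t := by exact_mod_cast hit
  apply Real.log_le_log (by positivity)
  have h1 : (0:ℝ) ≤ ((t:ℝ)+1) * ((t:ℝ)+2) - ((i:ℝ)+1) * ((i:ℝ)+2) := by
    nlinarith [mul_nonneg (sub_nonneg.mpr hit') (by positivity : (0:ℝ) ≤ (t:ℝ)+(i:ℝ)+3)]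
  nlinarith [mul_nonneg hc0.le h1]

lemma iota_div_anti (c : ℝ) (hc : 1 ≤ c) (i t : ℕ) (hi : 1 ≤ i) (hit : i ≤ t) :
    Real.log (c * ((t:ℝ) + 1) * ((t:ℝ) + 2)) / t ≤
      Real.log (c * ((i:ℝ) + 1) * ((i:ℝ) + 2)) / i := by
  have hc0 : (0:ℝ) < c := by linarith
  have hi0 : (0:ℝ) < (i:ℝ) := by exact_mod_cast Nat.pos_of_ne_zero (by omega)
  have ht0 : (0:ℝ) < (t:ℝ) := by exact_mod_cast Nat.pos_of_ne_zero (by omega)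
  have hti : (i:ℝ) ≤ (t:ℝ) := by exact_mod_cast hit
  set Lt := Real.log (c * ((t:ℝ) + 1) * ((t:ℝ) + 2)) with hLt_def
  set Li := Real.log (c * ((i:ℝ) + 1) * ((i:ℝ) + 2)) with hLi_def
  rw [div_le_div_iff₀ ht0 hi0]
  have hi1 : (0:ℝ) < (i:ℝ) + 1 := by positivity
  -- Lt ≤ Li + 2 (t - i)/(i+1)
  have hLt_split : Lt = Real.log c + Real.log ((t:ℝ)+1) + Real.log ((t:ℝ)+2) := by
    rw [hLt_def, Real.log_mul (by positivity) (by positivity),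
      Real.log_mul hc0.ne' (by positivity)]
  have hLi_split : Li = Real.log c + Real.log ((i:ℝ)+1) + Real.log ((i:ℝ)+2) := by
    rw [hLi_def, Real.log_mul (by positivity) (by positivity),
      Real.log_mul hc0.ne' (by positivity)]
  have b1 : Real.log ((t:ℝ)+1) - Real.log ((i:ℝ)+1) ≤ ((t:ℝ)-i)/((i:ℝ)+1) := by
    rw [← Real.log_div (by positivity) (by positivity)]
    have := Real.log_le_sub_one_of_pos (show (0:ℝ) < ((t:ℝ)+1)/((i:ℝ)+1) by positivity)
    have heq : ((t:ℝ)+1)/((i:ℝ)+1) - 1 = ((t:ℝ)-i)/((i:ℝ)+1) := by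
      field_simp
      ring
    linarith
  have b2 : Real.log ((t:ℝ)+2) - Real.log ((i:ℝ)+2) ≤ ((t:ℝ)-i)/((i:ℝ)+1) := by
    rw [← Real.log_div (by positivity) (by positivity)]
    have := Real.log_le_sub_one_of_pos (show (0:ℝ) < ((t:ℝ)+2)/((i:ℝ)+2) by positivity)
    have heq : ((t:ℝ)+2)/((i:ℝ)+2) - 1 = ((t:ℝ)-i)/((i:ℝ)+2) := by
      field_simp
      ring
    have hle : ((t:ℝ)-i)/((i:ℝ)+2) ≤ ((t:ℝ)-i)/((i:ℝ)+1) := by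
      apply div_le_div_of_nonneg_left (by linarith) hi1 (by linarith)
    linarith
  have hd : Lt ≤ Li + 2 * (((t:ℝ)-i)/((i:ℝ)+1)) := by
    rw [hLt_split, hLi_split]; linarith
  have hcancel : ((t:ℝ)-i)/((i:ℝ)+1) * ((i:ℝ)+1) = (t:ℝ)-i :=
    div_mul_cancel₀ _ hi1.ne'
  have hd' : Lt * ((i:ℝ)+1) ≤ Li * ((i:ℝ)+1) + 2 * ((t:ℝ)-i) := by
    have := mul_le_mul_of_nonneg_right hd hi1.le
    nlinarith [this, hcancel]
  have hLi2 : 2 * (i:ℝ) / ((i:ℝ)+1) ≤ Li := two_div_le_log c hc i hi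
  have hLi' : 2 * (i:ℝ) ≤ Li * ((i:ℝ)+1) := by
    have := mul_le_mul_of_nonneg_right hLi2 hi1.le
    have hcancel2 : 2 * (i:ℝ)/((i:ℝ)+1) * ((i:ℝ)+1) = 2 * (i:ℝ) := div_mul_cancel₀ _ hi1.ne'
    linarith [hcancel2 ▸ this]
  nlinarith [mul_le_mul_of_nonneg_right hd' hi0.le,
    mul_le_mul_of_nonneg_right hLi' (sub_nonneg.mpr hti), hi1]

/-- with `ι(t) = log(c (t+1) (t+2))`,
`√(ι(t)/t) ≤ ∑_{i=1}^t α_t^i √(ι(i)/i) ≤ 2 √(ι(t)/t)` for all `t ≥ 1`. -/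
theorem alphaW_iota_sum (H : ℕ) (hH : 1 ≤ H) (c : ℝ) (hc : 1 ≤ c) (t : ℕ) (ht : 1 ≤ t) :
    Real.sqrt (Real.log (c * ((t : ℝ) + 1) * ((t : ℝ) + 2)) / t) ≤
      (∑ i ∈ Finset.Icc 1 t,
        alphaW H t i * Real.sqrt (Real.log (c * ((i : ℝ) + 1) * ((i : ℝ) + 2)) / i)) ∧
    (∑ i ∈ Finset.Icc 1 t,
        alphaW H t i * Real.sqrt (Real.log (c * ((i : ℝ) + 1) * ((i : ℝ) + 2)) / i)) ≤
      2 * Real.sqrt (Real.log (c * ((t : ℝ) + 1) * ((t : ℝ) + 2)) / t) := by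
  have hsum := sum_alphaW H t ht
  constructor
  · calc Real.sqrt (Real.log (c * ((t : ℝ) + 1) * ((t : ℝ) + 2)) / t)
        = ∑ i ∈ Finset.Icc 1 t,
            alphaW H t i * Real.sqrt (Real.log (c * ((t : ℝ) + 1) * ((t : ℝ) + 2)) / t) := by
          rw [← Finset.sum_mul, hsum, one_mul]
      _ ≤ _ := by
          apply Finset.sum_le_sum
          intro i hi
          rw [Finset.mem_Icc] at hi
          apply mul_le_mul_of_nonneg_left _ (alphaW_nonneg H t i hi.1)
          exact Real.sqrt_le_sqrt (iota_div_anti c hc i t hi.1 hi.2)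
  · have hLt_nonneg : 0 ≤ Real.log (c * ((t : ℝ) + 1) * ((t : ℝ) + 2)) :=
      (iota_pos c hc t).le
    calc (∑ i ∈ Finset.Icc 1 t,
          alphaW H t i * Real.sqrt (Real.log (c * ((i : ℝ) + 1) * ((i : ℝ) + 2)) / i))
        ≤ ∑ i ∈ Finset.Icc 1 t,
            alphaW H t i *
              (Real.sqrt (Real.log (c * ((t : ℝ) + 1) * ((t : ℝ) + 2))) * (Real.sqrt i)⁻¹) := by
          apply Finset.sum_le_sum
          intro i hi
          rw [Finset.mem_Icc] at hi
          apply mul_le_mul_of_nonneg_left _ (alphaW_nonneg H t i hi.1)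
          have hLi_nonneg : 0 ≤ Real.log (c * ((i : ℝ) + 1) * ((i : ℝ) + 2)) :=
            (iota_pos c hc i).le
          rw [Real.sqrt_div hLi_nonneg, ← div_eq_mul_inv]
          apply div_le_div_of_nonneg_right
          · exact Real.sqrt_le_sqrt (iota_mono c hc i t hi.2)
          · exact Real.sqrt_nonneg _
      _ = Real.sqrt (Real.log (c * ((t : ℝ) + 1) * ((t : ℝ) + 2))) *
            ∑ i ∈ Finset.Icc 1 t, alphaW H t i * (Real.sqrt i)⁻¹ := by
          rw [Finset.mul_sum]
          apply Finset.sum_congr rfl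
          intro i _
          ring
      _ ≤ Real.sqrt (Real.log (c * ((t : ℝ) + 1) * ((t : ℝ) + 2))) * (2 * (Real.sqrt t)⁻¹) :=
          mul_le_mul_of_nonneg_left (sum_alphaW_inv_sqrt H t ht) (Real.sqrt_nonneg _)
      _ = 2 * Real.sqrt (Real.log (c * ((t : ℝ) + 1) * ((t : ℝ) + 2)) / t) := by
          rw [Real.sqrt_div hLt_nonneg, div_eq_mul_inv]
          ring
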